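/- arXiv:1806.08919 — 2 statements merged into one kernel-verified Lean document; each statement's English description precedes it below -/
import Mathlib

section
/- Let n ≥ 1 and let a⁽⁰⁾, a⁽¹⁾, …, a⁽ᴷ⁾ : Fin n → ℕ be a sequence of tuples together with indices i₀, i₁, …, i_K ∈ Fin n such that for every k with 1 ≤ k ≤ K: (i) i_k ≠ i_{k−1}; (ii) a⁽ᵏ⁾ agrees with a⁽ᵏ⁻¹⁾ at every index other than i_{k−1}; (iii) a⁽ᵏ⁾(i_{k−1}) + 1 ≤ a⁽ᵏ⁻¹⁾(i_k). Suppose moreover that a⁽ᵏ⁾(i) ≤ M − 1 for all k ≥ 1 and all i, where M = max_i a⁽⁰⁾(i). Then for every k ≥ 1 one has Σ_i a⁽ᵏ⁾(i) ≤ Σ_i a⁽⁰⁾(i) + M − k − 1. -/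
lemma sum_swap_aux {n : ℕ} (f g : Fin n → ℕ) (j : Fin n)
    (h : ∀ i : Fin n, i ≠ j → f i = g i) :
    (∑ i, f i) + g j = (∑ i, g i) + f j := by
  have hf : (∑ i, f i) = f j + ∑ i ∈ Finset.univ.erase j, f i :=
    (Finset.add_sum_erase _ f (Finset.mem_univ j)).symm
  have hg : (∑ i, g i) = g j + ∑ i ∈ Finset.univ.erase j, g i :=
    (Finset.add_sum_erase _ g (Finset.mem_univ j)).symm
  have he : (∑ i ∈ Finset.univ.erase j, f i) = ∑ i ∈ Finset.univ.erase j, g i :=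
    Finset.sum_congr rfl (fun i hi => h i (Finset.ne_of_mem_erase hi))
  rw [hf, hg, he]; ring

theorem stmt_1 (n K : ℕ) (hn : 1 ≤ n) (a : ℕ → Fin n → ℕ) (idx : ℕ → Fin n)
    (hne : ∀ k, 1 ≤ k → k ≤ K → idx k ≠ idx (k - 1))
    (hagree : ∀ k, 1 ≤ k → k ≤ K → ∀ i : Fin n, i ≠ idx (k - 1) → a k i = a (k - 1) i)
    (hdec : ∀ k, 1 ≤ k → k ≤ K → a k (idx (k - 1)) + 1 ≤ a (k - 1) (idx k))
    (hbound : ∀ k, 1 ≤ k → k ≤ K → ∀ i : Fin n,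
      a k i + 1 ≤ Finset.univ.sup (a 0)) :
    ∀ k, 1 ≤ k → k ≤ K →
      (∑ i, a k i) + k + 1 ≤ (∑ i, a 0 i) + Finset.univ.sup (a 0) := by
  have inv : ∀ k, 1 ≤ k → k ≤ K →
      (∑ i, a k i) + a 0 (idx 0) + k ≤ (∑ i, a 0 i) + a k (idx k) := by
    intro k hk
    induction k, hk using Nat.le_induction with
    | base =>
      intro hK
      have hs := sum_swap_aux (a 1) (a 0) (idx 0)
        (by simpa using hagree 1 le_rfl hK)
      have hd := hdec 1 le_rfl hK
      have hagr : a 0 (idx 1) = a 1 (idx 1) :=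
        (hagree 1 le_rfl hK (idx 1) (by simpa using hne 1 le_rfl hK)).symm
      simp only [Nat.sub_self] at hs hd
      omega
    | succ k hk ih =>
      intro hK
      have hk1 : k ≤ K := le_trans (Nat.le_succ k) hK
      have ihk := ih hk1
      have hs := sum_swap_aux (a (k + 1)) (a k) (idx k)
        (by simpa using hagree (k + 1) (by omega) hK)
      have hd := hdec (k + 1) (by omega) hK
      have hagr : a k (idx (k + 1)) = a (k + 1) (idx (k + 1)) :=
        (hagree (k + 1) (by omega) hK (idx (k + 1))
          (by simpa using hne (k + 1) (by omega) hK)).symm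
      simp only [Nat.add_sub_cancel] at hs hd
      omega
  intro k hk hK
  have h1 := inv k hk hK
  have h2 := hbound k hk hK (idx k)
  omega
end

section
/- Let n ≥ 1 and let a⁽⁰⁾, a⁽¹⁾, …, a⁽ᴷ⁾ : Fin n → ℕ and indices i₀, …, i_K ∈ Fin n be as follows: for every k with 1 ≤ k ≤ K, one has i_k ≠ i_{k−1}, the tuple a⁽ᵏ⁾ agrees with a⁽ᵏ⁻¹⁾ at every index other than i_{k−1}, and a⁽ᵏ⁾(i_{k−1}) + 1 ≤ a⁽ᵏ⁻¹⁾(i_k); assume also a⁽ᵏ⁾(i) ≤ max_j a⁽⁰⁾(j) − 1 for all k ≥ 1 and all i. Then K ≤ Σ_i a⁽⁰⁾(i) + max_i a⁽⁰⁾(i). In particular, there is no infinite sequence of tuples satisfying these conditions. -/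
theorem stmt_2 (n K : ℕ) (hn : 1 ≤ n) (a : ℕ → Fin n → ℕ) (idx : ℕ → Fin n)
    (hne : ∀ k, 1 ≤ k → k ≤ K → idx k ≠ idx (k - 1))
    (hagree : ∀ k, 1 ≤ k → k ≤ K → ∀ i : Fin n, i ≠ idx (k - 1) → a k i = a (k - 1) i)
    (hdec : ∀ k, 1 ≤ k → k ≤ K → a k (idx (k - 1)) + 1 ≤ a (k - 1) (idx k))
    (hbound : ∀ k, 1 ≤ k → k ≤ K → ∀ i : Fin n,
      a k i + 1 ≤ Finset.univ.sup (a 0)) :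
    K ≤ (∑ i, a 0 i) + Finset.univ.sup (a 0) := by
  -- potential function
  set Ψ : ℕ → ℤ := fun k => (∑ i, (a k i : ℤ)) - a k (idx k) with hΨ
  -- each step decreases Ψ by at least 1
  have hstep : ∀ k, 1 ≤ k → k ≤ K → Ψ k + 1 ≤ Ψ (k - 1) := by
    intro k hk1 hkK
    have hsum : (∑ i, (a k i : ℤ)) =
        (∑ i, (a (k - 1) i : ℤ)) - a (k - 1) (idx (k - 1)) + a k (idx (k - 1)) := by
      rw [← Finset.add_sum_erase _ (fun i => (a k i : ℤ)) (Finset.mem_univ (idx (k - 1))),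
          ← Finset.add_sum_erase _ (fun i => (a (k - 1) i : ℤ)) (Finset.mem_univ (idx (k - 1)))]
      have : ∀ i ∈ Finset.univ.erase (idx (k - 1)), (a k i : ℤ) = a (k - 1) i := by
        intro i hi
        exact_mod_cast hagree k hk1 hkK i (Finset.ne_of_mem_erase hi)
      rw [Finset.sum_congr rfl this]
      ring
    have hfix : (a k (idx k) : ℤ) = a (k - 1) (idx k) := by
      exact_mod_cast hagree k hk1 hkK (idx k) (hne k hk1 hkK)
    have hd : (a k (idx (k - 1)) : ℤ) + 1 ≤ a (k - 1) (idx k) := by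
      exact_mod_cast hdec k hk1 hkK
    simp only [hΨ]
    rw [hsum, hfix]
    linarith
  -- hence Ψ k + k ≤ Ψ 0 for k ≤ K
  have hiter : ∀ k, k ≤ K → Ψ k + k ≤ Ψ 0 := by
    intro k
    induction k with
    | zero => simp
    | succ m ih =>
      intro hmK
      have h1 := hstep (m + 1) (Nat.le_add_left 1 m) hmK
      simp only [Nat.add_sub_cancel] at h1
      have h2 := ih (Nat.le_of_succ_le hmK)
      push_cast
      linarith
  have hK := hiter K le_rfl
  -- Ψ K ≥ 0
  have hpos : 0 ≤ Ψ K := by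
    simp only [hΨ]
    have : (a K (idx K) : ℤ) ≤ ∑ i, (a K i : ℤ) :=
      Finset.single_le_sum (f := fun i => (a K i : ℤ)) (fun i _ => by positivity) (Finset.mem_univ _)
    linarith
  -- Ψ 0 ≤ ∑ a 0
  have h0 : Ψ 0 ≤ ∑ i, (a 0 i : ℤ) := by
    simp only [hΨ]
    have : (0 : ℤ) ≤ a 0 (idx 0) := by positivity
    linarith
  have : (K : ℤ) ≤ ∑ i, (a 0 i : ℤ) := by linarith
  have : (K : ℤ) ≤ (∑ i, (a 0 i : ℤ)) + Finset.univ.sup (a 0) := by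
    have : (0 : ℤ) ≤ Finset.univ.sup (a 0) := by positivity
    linarith
  exact_mod_cast this
end
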